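/- arXiv:0909.0918 — 2 statements merged into one kernel-verified Lean document; each statement's English description precedes it below -/
import Mathlib

section
/- Let n ≥ 4 and let c₀ < c₁ < … < c_{n-1} be prime numbers such that S := ∑_{i=0}^{n-2} 1/cᵢ satisfies S < 1 < S + 1/c_{n-1}, with c_{n-1} > 8, and assume c_{n-1} is the largest prime q satisfying S + 1/q > 1 (i.e., for every prime q > c_{n-1} one has S + 1/q ≤ 1). Then for any primes p₁ < p₂ < p₃ with c_{n-1} < pⱼ < 2·c_{n-1} for j = 1,2,3, the (n+1)-tuple of primes (c₀, …, c_{n-2}, p₂, p₃) satisfies S + 1/p₂ < 1 < S + 1/p₂ + 1/p₃. -/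
/-- The inductive step in the construction of primes `c₀ < … < c_{n-1}, p₂, p₃` whose
reciprocal sums satisfy `S + 1/p₂ < 1 < S + 1/p₂ + 1/p₃`. -/
theorem stmt_1 (n : ℕ) (hn : 4 ≤ n) (c : ℕ → ℕ)
    (hc_prime : ∀ i, i ≤ n - 1 → Nat.Prime (c i))
    (hc_mono : ∀ i j, i < j → j ≤ n - 1 → c i < c j)
    (S : ℚ) (hS : S = ∑ i ∈ Finset.range (n - 1), (1 : ℚ) / (c i : ℚ))
    (hS1 : S < 1) (hS2 : 1 < S + 1 / (c (n - 1) : ℚ))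
    (h8 : 8 < c (n - 1))
    (hmax : ∀ q : ℕ, Nat.Prime q → c (n - 1) < q → S + 1 / (q : ℚ) ≤ 1)
    (p₁ p₂ p₃ : ℕ)
    (hp₁ : Nat.Prime p₁) (hp₂ : Nat.Prime p₂) (hp₃ : Nat.Prime p₃)
    (h12 : p₁ < p₂) (h23 : p₂ < p₃)
    (hb₁ : c (n - 1) < p₁ ∧ p₁ < 2 * c (n - 1))
    (hb₂ : c (n - 1) < p₂ ∧ p₂ < 2 * c (n - 1))
    (hb₃ : c (n - 1) < p₃ ∧ p₃ < 2 * c (n - 1)) :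
    S + 1 / (p₂ : ℚ) < 1 ∧ 1 < S + 1 / (p₂ : ℚ) + 1 / (p₃ : ℚ) := by
  have hp₁pos : (0 : ℚ) < (p₁ : ℚ) := by exact_mod_cast hp₁.pos
  have hp₂pos : (0 : ℚ) < (p₂ : ℚ) := by exact_mod_cast hp₂.pos
  have hp₃pos : (0 : ℚ) < (p₃ : ℚ) := by exact_mod_cast hp₃.pos
  have hcpos : (0 : ℚ) < (c (n - 1) : ℚ) := by positivity
  constructor
  · have h1 : S + 1 / (p₁ : ℚ) ≤ 1 := hmax p₁ hp₁ hb₁.1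
    have h2 : 1 / (p₂ : ℚ) < 1 / (p₁ : ℚ) := by
      apply one_div_lt_one_div_of_lt hp₁pos
      exact_mod_cast h12
    linarith
  · have h2 : 1 / (2 * (c (n - 1) : ℚ)) < 1 / (p₂ : ℚ) := by
      apply one_div_lt_one_div_of_lt hp₂pos
      exact_mod_cast hb₂.2
    have h3 : 1 / (2 * (c (n - 1) : ℚ)) < 1 / (p₃ : ℚ) := by
      apply one_div_lt_one_div_of_lt hp₃pos
      exact_mod_cast hb₃.2
    have h4 : 1 / (2 * (c (n - 1) : ℚ)) + 1 / (2 * (c (n - 1) : ℚ)) = 1 / (c (n - 1) : ℚ) := by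
      rw [← add_div, div_eq_div_iff (by positivity) hcpos.ne']; ring
    linarith
end

section
/- Let ζ ∈ ℂ be a primitive fifth root of unity, let P ∈ SL(5,ℂ) be the cyclic permutation matrix sending the standard basis vector eᵢ to e_{i+1} (indices modulo 5), let D = diag(ζ, ζ², ζ³, ζ⁴, 1) ∈ SL(5,ℂ), and let ℍ = ⟨P, D⟩ ≤ SL(5,ℂ). Let n ≥ 0 be an integer and let W be the complex vector space of homogeneous polynomials of degree n in ℂ[x₁,…,x₅], on which ℍ acts by (g·f)(x) = f(g⁻¹·x). If V ⊆ W is an ℍ-invariant linear subspace, then either 5 divides dim V or 5 divides n. -/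
/-- The action of a matrix `g` on polynomials, `f ↦ f(g ⬝ x)`; the group action of `g`
on a polynomial `f` is then `polyAct g⁻¹ f`, i.e. `(g · f)(x) = f(g⁻¹ ⬝ x)`. -/
noncomputable def polyAct (g : Matrix (Fin 5) (Fin 5) ℂ) :
    MvPolynomial (Fin 5) ℂ → MvPolynomial (Fin 5) ℂ :=
  MvPolynomial.aeval fun i => ∑ j, MvPolynomial.C (g i j) * MvPolynomial.X j

open MvPolynomial in
lemma polyAct_polyAct (g h : Matrix (Fin 5) (Fin 5) ℂ) (f : MvPolynomial (Fin 5) ℂ) :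
    polyAct g (polyAct h f) = polyAct (h * g) f := by
  unfold polyAct
  rw [← AlgHom.comp_apply]
  refine DFunLike.congr_fun ?_ f
  apply MvPolynomial.algHom_ext
  intro i
  simp [Matrix.mul_apply, Finset.mul_sum, Finset.sum_mul]
  rw [Finset.sum_comm]
  congr 1; funext k; congr 1; funext j; ring

open MvPolynomial in
lemma polyAct_one (f : MvPolynomial (Fin 5) ℂ) : polyAct 1 f = f := by
  unfold polyAct
  have : (fun i => ∑ j, MvPolynomial.C ((1 : Matrix (Fin 5) (Fin 5) ℂ) i j) * MvPolynomial.X j)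
      = (MvPolynomial.X : Fin 5 → MvPolynomial (Fin 5) ℂ) := by
    funext i
    simp [Matrix.one_apply]
  rw [this]
  simp

open MvPolynomial in
lemma aeval_smul_of_homog {n : ℕ} (c : ℂ) (u : Fin 5 → MvPolynomial (Fin 5) ℂ)
    (f : MvPolynomial (Fin 5) ℂ) (hf : f.IsHomogeneous n) :
    aeval (fun i => c • u i) f = c ^ n • aeval u f := by
  rw [f.as_sum, map_sum, map_sum, Finset.smul_sum]
  apply Finset.sum_congr rfl
  intro m hm
  rw [aeval_monomial, aeval_monomial]
  have hdeg : (m.sum fun _ e => e) = n := by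
    have := hf (mem_support_iff.mp hm)
    simpa [Finsupp.weight, Finsupp.linearCombination, Finsupp.sum] using this
  have key : (m.prod fun i k => (c • u i) ^ k) = C (c ^ n) * m.prod fun i k => u i ^ k := by
    rw [← hdeg, Finsupp.prod, Finsupp.prod, Finsupp.sum]
    simp only [smul_eq_C_mul, mul_pow, Finset.prod_mul_distrib, ← map_pow, ← map_prod,
      Finset.prod_pow_eq_pow_sum]
  rw [key, smul_eq_C_mul, map_pow]
  ring

open MvPolynomial in
lemma polyAct_smul {n : ℕ} (c : ℂ) (M : Matrix (Fin 5) (Fin 5) ℂ)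
    (f : MvPolynomial (Fin 5) ℂ) (hf : f.IsHomogeneous n) :
    polyAct (c • M) f = c ^ n • polyAct M f := by
  unfold polyAct
  have : (fun i => ∑ j, MvPolynomial.C ((c • M) i j) * MvPolynomial.X j)
      = fun i => c • ∑ j, MvPolynomial.C (M i j) * MvPolynomial.X j := by
    funext i
    rw [Finset.smul_sum]
    apply Finset.sum_congr rfl
    intro j _
    rw [Matrix.smul_apply, smul_eq_mul, map_mul, smul_eq_C_mul, mul_assoc]
  rw [this]
  exact aeval_smul_of_homog c _ f hf

/-- The key linear-algebra lemma, proved by a trace argument: if `d^5 = 1`,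
`p` is invertible with inverse `q`, and `p d p⁻¹ = ω d` with `ω^j ≠ 1` for `0 < j < 5`,
then the traces of `d, d², d³, d⁴` vanish, so the projection `(1/5)∑ dʲ` onto the
fixed space of `d` has trace `(dim V)/5`, whence `5 ∣ dim V`. -/
lemma key_lemma {V : Type*} [AddCommGroup V] [Module ℂ V] [FiniteDimensional ℂ V]
    (d p q : V →ₗ[ℂ] V) (ω : ℂ)
    (hd5 : d ^ 5 = 1) (hpq : p * q = 1) (hqp : q * p = 1)
    (hrel : p * d = ω • (d * p))
    (hω : ∀ j : ℕ, 0 < j → j < 5 → ω ^ j ≠ 1) :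
    5 ∣ Module.finrank ℂ V := by
  have hrelj : ∀ j : ℕ, p * d ^ j = ω ^ j • (d ^ j * p) := by
    intro j
    induction j with
    | zero => simp
    | succ j ih =>
      rw [pow_succ, ← mul_assoc, ih, smul_mul_assoc, mul_assoc, hrel, pow_succ]
      rw [mul_smul_comm, ← mul_assoc, smul_smul]
  have htr : ∀ j : ℕ, 0 < j → j < 5 → LinearMap.trace ℂ V (d ^ j) = 0 := by
    intro j hj1 hj2
    have h1 : p * d ^ j * q = ω ^ j • d ^ j := by
      rw [hrelj j, smul_mul_assoc, mul_assoc, hpq, mul_one]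
    have h2 : LinearMap.trace ℂ V (p * d ^ j * q) = LinearMap.trace ℂ V (d ^ j) := by
      rw [LinearMap.trace_mul_comm, ← mul_assoc, hqp, one_mul]
    rw [h1, map_smul, smul_eq_mul] at h2
    have h3 : (ω ^ j - 1) * LinearMap.trace ℂ V (d ^ j) = 0 := by
      rw [sub_mul, one_mul, h2, sub_self]
    rcases mul_eq_zero.mp h3 with h | h
    · exact ((hω j hj1 hj2) (sub_eq_zero.mp h)).elim
    · exact h
  set S : V →ₗ[ℂ] V := ∑ j ∈ Finset.range 5, d ^ j with hS
  have hSd : S * d = S := by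
    have e1 : S = 1 + d ^ 1 + d ^ 2 + d ^ 3 + d ^ 4 := by
      simp [hS, Finset.sum_range_succ]
    have e2 : S * d = d ^ 1 + d ^ 2 + d ^ 3 + d ^ 4 + d ^ 5 := by
      rw [e1]; noncomm_ring
    rw [e2, hd5, e1]; abel
  have hSdj : ∀ j : ℕ, S * d ^ j = S := by
    intro j
    induction j with
    | zero => simp
    | succ j ih => rw [pow_succ, ← mul_assoc, ih, hSd]
  have hSS : S * S = (5 : ℂ) • S := by
    have e3 : S * S = ∑ j ∈ Finset.range 5, S * d ^ j := by
      nth_rewrite 2 [hS]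
      rw [Finset.mul_sum]
    rw [e3, Finset.sum_congr rfl fun j _ => hSdj j, Finset.sum_const, Finset.card_range]
    module
  set π : V →ₗ[ℂ] V := (5 : ℂ)⁻¹ • S with hπ
  have hππ : π * π = π := by
    rw [hπ, smul_mul_smul_comm, hSS, smul_smul]
    norm_num
  have hproj : LinearMap.IsProj (LinearMap.range π) π := by
    constructor
    · intro x; exact ⟨x, rfl⟩
    · rintro x ⟨y, rfl⟩
      have := congrArg (fun f : V →ₗ[ℂ] V => f y) hππ
      simpa [Module.End.mul_apply] using this
  have htrπ : LinearMap.trace ℂ V π = (5 : ℂ)⁻¹ * (Module.finrank ℂ V : ℂ) := by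
    rw [hπ, map_smul, smul_eq_mul, hS, map_sum]
    congr 1
    have : ∀ j ∈ Finset.range 5, LinearMap.trace ℂ V (d ^ j)
        = if j = 0 then (Module.finrank ℂ V : ℂ) else 0 := by
      intro j hj
      rcases Nat.eq_zero_or_pos j with h0 | h0
      · simp [h0, LinearMap.trace_one]
      · rw [if_neg h0.ne', htr j h0 (Finset.mem_range.mp hj)]
    rw [Finset.sum_congr rfl this]
    simp
  have htrπ2 : LinearMap.trace ℂ V π = (Module.finrank ℂ (LinearMap.range π) : ℂ) :=
    hproj.trace
  have hcast : (Module.finrank ℂ V : ℂ) = 5 * (Module.finrank ℂ (LinearMap.range π) : ℂ) := by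
    rw [← htrπ2, htrπ]
    ring
  have : Module.finrank ℂ V = 5 * Module.finrank ℂ (LinearMap.range π) := by
    exact_mod_cast hcast
  exact ⟨_, this⟩

/-- Let `ℍ = ⟨P, D⟩ ⊆ SL(5,ℂ)` be the Heisenberg group in its Schrödinger representation.
If `V` is an `ℍ`-invariant subspace of the space of homogeneous polynomials of degree `n`
in `5` variables, then `5 ∣ dim V` or `5 ∣ n`. -/
theorem stmt_7 (ζ : ℂ) (hζ : IsPrimitiveRoot ζ 5)
    (P D : Matrix.SpecialLinearGroup (Fin 5) ℂ)
    (hP : (P : Matrix (Fin 5) (Fin 5) ℂ) =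
      Matrix.of fun j i : Fin 5 => if j = i + 1 then (1 : ℂ) else 0)
    (hD : (D : Matrix (Fin 5) (Fin 5) ℂ) = Matrix.diagonal ![ζ, ζ ^ 2, ζ ^ 3, ζ ^ 4, 1])
    (H : Subgroup (Matrix.SpecialLinearGroup (Fin 5) ℂ))
    (hH : H = Subgroup.closure {P, D})
    (n : ℕ) (V : Submodule ℂ (MvPolynomial (Fin 5) ℂ))
    (hV : V ≤ MvPolynomial.homogeneousSubmodule (Fin 5) ℂ n)
    (hinv : ∀ g ∈ H, ∀ f ∈ V,
      polyAct ((g⁻¹ : Matrix.SpecialLinearGroup (Fin 5) ℂ) : Matrix (Fin 5) (Fin 5) ℂ) f ∈ V) :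
    5 ∣ Module.finrank ℂ V ∨ 5 ∣ n := by
  by_cases hn : 5 ∣ n
  · exact Or.inr hn
  left
  subst hH
  -- notation
  set Dm := (D : Matrix (Fin 5) (Fin 5) ℂ) with hDm
  set Pm := (P : Matrix (Fin 5) (Fin 5) ℂ) with hPm
  set Qm := ((P⁻¹ : Matrix.SpecialLinearGroup (Fin 5) ℂ) : Matrix (Fin 5) (Fin 5) ℂ) with hQm
  have h5 : ζ ^ 5 = 1 := hζ.pow_eq_one
  -- finite dimensionality
  haveI : FiniteDimensional ℂ V := by
    apply Submodule.finiteDimensional_of_le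
      (S₂ := MvPolynomial.restrictTotalDegree (Fin 5) ℂ n)
    intro f hf
    rw [MvPolynomial.mem_restrictTotalDegree]
    exact ((MvPolynomial.mem_homogeneousSubmodule _ _).mp (hV hf)).totalDegree_le
  -- invariance of V
  have hPmem : P ∈ Subgroup.closure ({P, D} : Set (Matrix.SpecialLinearGroup (Fin 5) ℂ)) :=
    Subgroup.subset_closure (by simp)
  have hDmem : D ∈ Subgroup.closure ({P, D} : Set (Matrix.SpecialLinearGroup (Fin 5) ℂ)) :=
    Subgroup.subset_closure (by simp)
  have hDV : ∀ x ∈ V, polyAct Dm x ∈ V := by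
    intro x hx
    have := hinv D⁻¹ (inv_mem hDmem) x hx
    rwa [inv_inv] at this
  have hPV : ∀ x ∈ V, polyAct Pm x ∈ V := by
    intro x hx
    have := hinv P⁻¹ (inv_mem hPmem) x hx
    rwa [inv_inv] at this
  have hQV : ∀ x ∈ V, polyAct Qm x ∈ V := fun x hx => hinv P hPmem x hx
  -- matrix identities
  have hD5 : Dm * (Dm * (Dm * (Dm * Dm))) = 1 := by
    rw [hD]
    simp only [Matrix.diagonal_mul_diagonal]
    ext i j
    rcases eq_or_ne i j with rfl | hij
    · fin_cases i <;> simp [Matrix.diagonal_apply_eq, Matrix.one_apply_eq] <;>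
        first
          | linear_combination h5
          | linear_combination (ζ ^ 5 + 1) * h5
          | linear_combination (ζ ^ 10 + ζ ^ 5 + 1) * h5
          | linear_combination (ζ ^ 15 + ζ ^ 10 + ζ ^ 5 + 1) * h5
    · simp [Matrix.diagonal_apply_ne _ hij, Matrix.one_apply_ne hij]
  have hDP : Dm * Pm = ζ • (Pm * Dm) := by
    rw [hD, hP]
    ext i j
    simp only [Matrix.smul_apply, Matrix.diagonal_mul, Matrix.mul_diagonal]
    fin_cases i <;> fin_cases j <;> simp [Matrix.of_apply]
    all_goals (try ring)
    all_goals linear_combination -h5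
  have hQP : Qm * Pm = 1 := by
    rw [hQm, hPm, ← Matrix.SpecialLinearGroup.coe_mul, inv_mul_cancel,
      Matrix.SpecialLinearGroup.coe_one]
  have hPQ : Pm * Qm = 1 := by
    rw [hQm, hPm, ← Matrix.SpecialLinearGroup.coe_mul, mul_inv_cancel,
      Matrix.SpecialLinearGroup.coe_one]
  -- linear endomorphisms of V
  have polyActL : ∀ g : Matrix (Fin 5) (Fin 5) ℂ,
      ∃ L : MvPolynomial (Fin 5) ℂ →ₗ[ℂ] MvPolynomial (Fin 5) ℂ, ∀ f, L f = polyAct g f :=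
    fun g => ⟨(MvPolynomial.aeval fun i =>
      ∑ j, MvPolynomial.C (g i j) * MvPolynomial.X j).toLinearMap, fun _ => rfl⟩
  obtain ⟨Ld, hLd⟩ := polyActL Dm
  obtain ⟨Lp, hLp⟩ := polyActL Pm
  obtain ⟨Lq, hLq⟩ := polyActL Qm
  have hLdV : ∀ x ∈ V, Ld x ∈ V := fun x hx => by rw [hLd]; exact hDV x hx
  have hLpV : ∀ x ∈ V, Lp x ∈ V := fun x hx => by rw [hLp]; exact hPV x hx
  have hLqV : ∀ x ∈ V, Lq x ∈ V := fun x hx => by rw [hLq]; exact hQV x hx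
  set d : V →ₗ[ℂ] V := Ld.restrict hLdV with hd
  set p : V →ₗ[ℂ] V := Lp.restrict hLpV with hp
  set q : V →ₗ[ℂ] V := Lq.restrict hLqV with hq
  have hd5 : d ^ 5 = 1 := by
    apply LinearMap.ext
    intro x
    apply Subtype.ext
    show (((d ^ 5) x : V) : MvPolynomial (Fin 5) ℂ) = (x : MvPolynomial (Fin 5) ℂ)
    have : (d ^ 5) x = d (d (d (d (d x)))) := by
      simp [pow_succ, Module.End.mul_apply]
    rw [this]
    simp only [hd, LinearMap.restrict_coe_apply, hLd]
    rw [polyAct_polyAct, polyAct_polyAct, polyAct_polyAct, polyAct_polyAct, hD5, polyAct_one]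
  have hpq : p * q = 1 := by
    apply LinearMap.ext
    intro x
    apply Subtype.ext
    show ((p (q x) : V) : MvPolynomial (Fin 5) ℂ) = (x : MvPolynomial (Fin 5) ℂ)
    simp only [hp, hq, LinearMap.restrict_coe_apply, hLp, hLq]
    rw [polyAct_polyAct, hQP, polyAct_one]
  have hqp : q * p = 1 := by
    apply LinearMap.ext
    intro x
    apply Subtype.ext
    show ((q (p x) : V) : MvPolynomial (Fin 5) ℂ) = (x : MvPolynomial (Fin 5) ℂ)
    simp only [hp, hq, LinearMap.restrict_coe_apply, hLp, hLq]
    rw [polyAct_polyAct, hPQ, polyAct_one]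
  have hrel : p * d = (ζ ^ n) • (d * p) := by
    apply LinearMap.ext
    intro x
    apply Subtype.ext
    have hhom : (x : MvPolynomial (Fin 5) ℂ).IsHomogeneous n :=
      (MvPolynomial.mem_homogeneousSubmodule _ _).mp (hV x.2)
    show ((p (d x) : V) : MvPolynomial (Fin 5) ℂ)
        = (((ζ ^ n) • (d * p)) x : MvPolynomial (Fin 5) ℂ)
    have hrhs : (((ζ ^ n) • (d * p)) x : MvPolynomial (Fin 5) ℂ)
        = (ζ ^ n) • ((d (p x) : V) : MvPolynomial (Fin 5) ℂ) := by
      simp [LinearMap.smul_apply, Module.End.mul_apply]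
    rw [hrhs]
    simp only [hp, hd, LinearMap.restrict_coe_apply, hLp, hLd]
    rw [polyAct_polyAct, polyAct_polyAct, hDP]
    exact polyAct_smul ζ (Pm * Dm) _ hhom
  have hω : ∀ j : ℕ, 0 < j → j < 5 → (ζ ^ n) ^ j ≠ 1 := by
    intro j hj1 hj2 hcontra
    rw [← pow_mul, hζ.pow_eq_one_iff_dvd] at hcontra
    rcases (Nat.Prime.dvd_mul (by norm_num)).mp hcontra with h | h
    · exact hn h
    · omega
  exact key_lemma d p q (ζ ^ n) hd5 hpq hqp hrel hω
end
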